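/- arXiv:math/9907030 — 6 statements merged into one kernel-verified Lean document; each statement's English description precedes it below -/
import Mathlib

section
/- Let A be a C*-algebra with a bounded approximate identity (e_λ). Then for every x in the Haagerup tensor product completion A ⊗_h A, one has x(1 ⊗ e_λ) → x and (e_λ ⊗ 1)x → x in the Haagerup norm. -/
open scoped TensorProduct
open Filter

/-- The Haagerup norm of an element of the algebraic tensor product `A ⊙ A`:
the infimum of `‖∑ pᵢ pᵢ*‖^{1/2} · ‖∑ qᵢ* qᵢ‖^{1/2}` over all finite representations
`x = ∑ pᵢ ⊗ qᵢ`. -/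
noncomputable def haagerupNorm (A : Type*) [NonUnitalNormedRing A] [StarRing A]
    [NormedSpace ℂ A] (x : A ⊗[ℂ] A) : ℝ :=
  sInf { c : ℝ | ∃ (n : ℕ) (p q : Fin n → A),
    x = ∑ i, p i ⊗ₜ[ℂ] q i ∧
    c = Real.sqrt ‖∑ i, p i * star (p i)‖ * Real.sqrt ‖∑ i, star (q i) * q i‖ }

lemma haagerup_tmul_le {A : Type*} [NonUnitalNormedRing A] [StarRing A] [CStarRing A]
    [NormedSpace ℂ A] (p q : A) :
    haagerupNorm A (p ⊗ₜ[ℂ] q) ≤ ‖p‖ * ‖q‖ := by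
  apply csInf_le
  · refine ⟨0, ?_⟩
    rintro c ⟨n, p', q', -, rfl⟩
    exact mul_nonneg (Real.sqrt_nonneg _) (Real.sqrt_nonneg _)
  · refine ⟨1, fun _ => p, fun _ => q, by simp, ?_⟩
    simp [Fin.sum_univ_one, CStarRing.norm_self_mul_star, CStarRing.norm_star_mul_self,
      Real.sqrt_mul_self (norm_nonneg _)]

lemma dense_tendsto {X : Type*} [NormedAddCommGroup X] [NormedSpace ℂ X]
    {Λ : Type*} (l : Filter Λ) [l.NeBot] (T : Λ → X →L[ℂ] X) (C : ℝ) (hC : 0 ≤ C)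
    (hT : ∀ i, ‖T i‖ ≤ C) {S : Set X} (hS : Dense S)
    (h : ∀ y ∈ S, Tendsto (fun i => T i y) l (nhds y)) (x : X) :
    Tendsto (fun i => T i x) l (nhds x) := by
  simp only [Metric.tendsto_nhds, dist_eq_norm] at h ⊢
  intro ε hε
  have hδ : 0 < ε / (2 * (C + 1)) := by positivity
  obtain ⟨y, hyb, hy⟩ := Metric.dense_iff.mp hS x _ hδ
  have hyx : ‖y - x‖ < ε / (2 * (C + 1)) := by
    rw [← dist_eq_norm]; rw [Metric.mem_ball] at hyb; exact hyb
  filter_upwards [h y hy (ε / 2) (by positivity)] with i hi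
  have h1 : ‖T i x - x‖ ≤ ‖T i (x - y)‖ + ‖T i y - y‖ + ‖y - x‖ := by
    have : T i x - x = T i (x - y) + (T i y - y) + (y - x) := by
      simp only [map_sub]; abel
    rw [this]
    exact (norm_add_le _ _).trans (by gcongr; exact norm_add_le _ _)
  have h2 : ‖T i (x - y)‖ ≤ C * ‖y - x‖ := by
    calc ‖T i (x - y)‖ ≤ ‖T i‖ * ‖x - y‖ := (T i).le_opNorm _
    _ ≤ C * ‖y - x‖ := by rw [norm_sub_rev]; gcongr; exact hT i
  have : C * ‖y - x‖ + ‖y - x‖ ≤ (C + 1) * (ε / (2 * (C + 1))) := by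
    rw [add_mul, one_mul]; gcongr
  have hcc : (C + 1) * (ε / (2 * (C + 1))) = ε / 2 := by field_simp
  calc ‖T i x - x‖ ≤ C * ‖y - x‖ + ‖T i y - y‖ + ‖y - x‖ := by linarith
  _ < ε := by rw [hcc] at this; linarith

/-- If `(e_λ)` is a bounded approximate identity of `A`, then for every
`x` in the Haagerup tensor product `A ⊗_h A` (modelled as an abstract completion `X` of
`A ⊙ A` for the Haagerup norm) one has `x(1 ⊗ e_λ) → x` and `(e_λ ⊗ 1)x → x` in norm.
Here `Rm a` and `Lm a` are the continuous extensions of `p ⊗ q ↦ p ⊗ qa` and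
`p ⊗ q ↦ ap ⊗ q`, which are bounded with norm at most `‖a‖`. -/
theorem approx_identity_haagerup
    {A : Type*}
    [NonUnitalNormedRing A] [StarRing A] [CStarRing A] [CompleteSpace A]
    [NormedSpace ℂ A] [IsScalarTower ℂ A A] [SMulCommClass ℂ A A] [StarModule ℂ A]
    {X : Type*} [NormedAddCommGroup X] [NormedSpace ℂ X] [CompleteSpace X]
    (ι : A ⊗[ℂ] A →ₗ[ℂ] X)
    (hiso : ∀ y : A ⊗[ℂ] A, ‖ι y‖ = haagerupNorm A y)
    (hdense : DenseRange ι)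
    (Rm Lm : A → X →L[ℂ] X)
    (hR : ∀ (a p q : A), Rm a (ι (p ⊗ₜ[ℂ] q)) = ι (p ⊗ₜ[ℂ] (q * a)))
    (hL : ∀ (a p q : A), Lm a (ι (p ⊗ₜ[ℂ] q)) = ι ((a * p) ⊗ₜ[ℂ] q))
    (hRnorm : ∀ a : A, ‖Rm a‖ ≤ ‖a‖) (hLnorm : ∀ a : A, ‖Lm a‖ ≤ ‖a‖)
    {Λ : Type*} (l : Filter Λ) [l.NeBot] (e : Λ → A) (C : ℝ)
    (hbdd : ∀ i, ‖e i‖ ≤ C)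
    (happrox : ∀ a : A, Filter.Tendsto (fun i => e i * a) l (nhds a) ∧
      Filter.Tendsto (fun i => a * e i) l (nhds a))
    (x : X) :
    Filter.Tendsto (fun i => Rm (e i) x) l (nhds x) ∧
      Filter.Tendsto (fun i => Lm (e i) x) l (nhds x) := by
  haveI : Nonempty Λ := Filter.nonempty_of_neBot l
  have hC0 : 0 ≤ C := le_trans (norm_nonneg _) (hbdd (Classical.arbitrary Λ))
  have tmul_bound : ∀ (p q : A), ‖ι (p ⊗ₜ[ℂ] q)‖ ≤ ‖p‖ * ‖q‖ := by
    intro p q; rw [hiso]; exact haagerup_tmul_le p q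
  have keyR : ∀ (p q : A) (f : Λ → A), Tendsto f l (nhds q) →
      Tendsto (fun i => ι (p ⊗ₜ[ℂ] f i)) l (nhds (ι (p ⊗ₜ[ℂ] q))) := by
    intro p q f hf
    rw [tendsto_iff_norm_sub_tendsto_zero]
    have hle : ∀ i, ‖ι (p ⊗ₜ[ℂ] f i) - ι (p ⊗ₜ[ℂ] q)‖ ≤ ‖p‖ * ‖f i - q‖ := by
      intro i
      have : ι (p ⊗ₜ[ℂ] f i) - ι (p ⊗ₜ[ℂ] q) = ι (p ⊗ₜ[ℂ] (f i - q)) := by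
        rw [← map_sub, ← TensorProduct.tmul_sub]
      rw [this]; exact tmul_bound _ _
    have h0 : Tendsto (fun i => ‖p‖ * ‖f i - q‖) l (nhds 0) := by
      have := tendsto_iff_norm_sub_tendsto_zero.mp hf
      simpa using this.const_mul ‖p‖
    exact squeeze_zero (fun i => norm_nonneg _) hle h0
  have keyL : ∀ (p q : A) (f : Λ → A), Tendsto f l (nhds p) →
      Tendsto (fun i => ι (f i ⊗ₜ[ℂ] q)) l (nhds (ι (p ⊗ₜ[ℂ] q))) := by
    intro p q f hf
    rw [tendsto_iff_norm_sub_tendsto_zero]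
    have hle : ∀ i, ‖ι (f i ⊗ₜ[ℂ] q) - ι (p ⊗ₜ[ℂ] q)‖ ≤ ‖f i - p‖ * ‖q‖ := by
      intro i
      have : ι (f i ⊗ₜ[ℂ] q) - ι (p ⊗ₜ[ℂ] q) = ι ((f i - p) ⊗ₜ[ℂ] q) := by
        rw [← map_sub, ← TensorProduct.sub_tmul]
      rw [this]; exact tmul_bound _ _
    have h0 : Tendsto (fun i => ‖f i - p‖ * ‖q‖) l (nhds 0) := by
      have := tendsto_iff_norm_sub_tendsto_zero.mp hf
      simpa using this.mul_const ‖q‖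
    exact squeeze_zero (fun i => norm_nonneg _) hle h0
  have hrange : ∀ y ∈ Set.range ι,
      Tendsto (fun i => Rm (e i) y) l (nhds y) ∧ Tendsto (fun i => Lm (e i) y) l (nhds y) := by
    rintro _ ⟨z, rfl⟩
    induction z using TensorProduct.induction_on with
    | zero => simp only [map_zero]; exact ⟨tendsto_const_nhds, tendsto_const_nhds⟩
    | tmul p q =>
      constructor
      · simp only [hR]
        exact keyR p q (fun i => q * e i) (happrox q).2
      · simp only [hL]
        exact keyL p q (fun i => e i * p) (happrox p).1
    | add y z hy hz =>
      simp only [map_add]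
      exact ⟨hy.1.add hz.1, hy.2.add hz.2⟩
  have hRb : ∀ i, ‖Rm (e i)‖ ≤ C := fun i => (hRnorm (e i)).trans (hbdd i)
  have hLb : ∀ i, ‖Lm (e i)‖ ≤ C := fun i => (hLnorm (e i)).trans (hbdd i)
  exact ⟨dense_tendsto l (fun i => Rm (e i)) C hC0 hRb hdense (fun y hy => (hrange y hy).1) x,
    dense_tendsto l (fun i => Lm (e i)) C hC0 hLb hdense (fun y hy => (hrange y hy).2) x⟩
end

section
/- Let A be a C*-algebra, I an index set, and (p_i)_{i∈I}, (q_i)_{i∈I} families in A such that the nets of finite partial sums ∑_{i∈F} p_i p_i* and ∑_{i∈F} q_i* q_i (over finite subsets F ⊆ I) converge in norm in A. Then the net of finite partial sums ∑_{i∈F} p_i ⊗ q_i converges in the Haagerup norm in A ⊗_h A, and ‖∑_{i∈I} p_i ⊗ q_i‖_h² ≤ ‖∑_{i∈I} p_i p_i*‖ · ‖∑_{i∈I} q_i* q_i‖. -/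
open scoped TensorProduct

lemma haagerupNorm_finset_le {A : Type*} [NonUnitalNormedRing A] [StarRing A]
    [NormedSpace ℂ A] {I : Type*} (p q : I → A) (F : Finset I) :
    haagerupNorm A (∑ i ∈ F, p i ⊗ₜ[ℂ] q i) ≤
      Real.sqrt ‖∑ i ∈ F, p i * star (p i)‖ * Real.sqrt ‖∑ i ∈ F, star (q i) * q i‖ := by
  apply csInf_le
  · exact ⟨0, by rintro c ⟨n, p', q', -, rfl⟩; positivity⟩
  · refine ⟨F.card, fun j => p (F.equivFin.symm j), fun j => q (F.equivFin.symm j), ?_, ?_⟩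
    · rw [Equiv.sum_comp F.equivFin.symm (fun x : F => p x ⊗ₜ[ℂ] q x),
        Finset.sum_coe_sort F (fun x => p x ⊗ₜ[ℂ] q x)]
    · rw [Equiv.sum_comp F.equivFin.symm (fun x : F => p x * star (p x)),
        Equiv.sum_comp F.equivFin.symm (fun x : F => star (q x) * q x),
        Finset.sum_coe_sort F (fun x => p x * star (p x)),
        Finset.sum_coe_sort F (fun x => star (q x) * q x)]

/-- If `(pᵢ)` and `(qᵢ)` are families in `A` such that the nets of finite
partial sums of `∑ pᵢ pᵢ*` and `∑ qᵢ* qᵢ` converge in norm, then the net of finite partial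
sums `∑ pᵢ ⊗ qᵢ` converges in the Haagerup tensor product `A ⊗_h A` (modelled as an
abstract completion `X` of `A ⊙ A` for the Haagerup norm), with
`‖∑ pᵢ ⊗ qᵢ‖² ≤ ‖∑ pᵢ pᵢ*‖ · ‖∑ qᵢ* qᵢ‖`. -/
theorem summable_haagerup_of_row_column
    {A : Type*}
    [NonUnitalNormedRing A] [StarRing A] [CStarRing A] [CompleteSpace A]
    [NormedSpace ℂ A] [IsScalarTower ℂ A A] [SMulCommClass ℂ A A] [StarModule ℂ A]
    {X : Type*} [NormedAddCommGroup X] [NormedSpace ℂ X] [CompleteSpace X]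
    (ι : A ⊗[ℂ] A →ₗ[ℂ] X)
    (hiso : ∀ y : A ⊗[ℂ] A, ‖ι y‖ = haagerupNorm A y)
    (hdense : DenseRange ι)
    {I : Type*} (p q : I → A) (P Q : A)
    (hp : HasSum (fun i => p i * star (p i)) P)
    (hq : HasSum (fun i => star (q i) * q i) Q) :
    ∃ s : X, HasSum (fun i => ι (p i ⊗ₜ[ℂ] q i)) s ∧ ‖s‖ ^ 2 ≤ ‖P‖ * ‖Q‖ := by
  classical
  set g : I → X := fun i => ι (p i ⊗ₜ[ℂ] q i) with hg
  have norm_le : ∀ F : Finset I, ‖∑ i ∈ F, g i‖ ≤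
      Real.sqrt ‖∑ i ∈ F, p i * star (p i)‖ * Real.sqrt ‖∑ i ∈ F, star (q i) * q i‖ := by
    intro F
    have h1 : (∑ i ∈ F, g i) = ι (∑ i ∈ F, p i ⊗ₜ[ℂ] q i) := (map_sum ι _ F).symm
    rw [h1, hiso]
    exact haagerupNorm_finset_le p q F
  have key : ∀ F : Finset I, ‖∑ i ∈ F, g i‖ ^ 2 ≤
      ‖∑ i ∈ F, p i * star (p i)‖ * ‖∑ i ∈ F, star (q i) * q i‖ := by
    intro F
    calc ‖∑ i ∈ F, g i‖ ^ 2
        ≤ (Real.sqrt ‖∑ i ∈ F, p i * star (p i)‖ *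
            Real.sqrt ‖∑ i ∈ F, star (q i) * q i‖) ^ 2 :=
          pow_le_pow_left₀ (norm_nonneg _) (norm_le F) 2
      _ = _ := by
          rw [mul_pow, Real.sq_sqrt (norm_nonneg _), Real.sq_sqrt (norm_nonneg _)]
  have hcau : CauchySeq (fun F : Finset I => ∑ i ∈ F, g i) := by
    rw [cauchySeq_finset_iff_sum_vanishing]
    intro e he
    obtain ⟨ε, hε, hball⟩ := Metric.mem_nhds_iff.mp he
    obtain ⟨s1, hs1⟩ := summable_iff_vanishing.mp hp.summable (Metric.ball 0 (ε / 2))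
      (Metric.ball_mem_nhds 0 (by positivity))
    obtain ⟨s2, hs2⟩ := summable_iff_vanishing.mp hq.summable (Metric.ball 0 (ε / 2))
      (Metric.ball_mem_nhds 0 (by positivity))
    refine ⟨s1 ∪ s2, fun t ht => ?_⟩
    have ha := mem_ball_zero_iff.mp (hs1 t (Finset.disjoint_union_right.mp ht).1)
    have hb := mem_ball_zero_iff.mp (hs2 t (Finset.disjoint_union_right.mp ht).2)
    apply hball
    rw [mem_ball_zero_iff]
    calc ‖∑ i ∈ t, g i‖
        ≤ Real.sqrt ‖∑ i ∈ t, p i * star (p i)‖ *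
            Real.sqrt ‖∑ i ∈ t, star (q i) * q i‖ := norm_le t
      _ ≤ Real.sqrt (ε / 2) * Real.sqrt (ε / 2) :=
          mul_le_mul (Real.sqrt_le_sqrt ha.le) (Real.sqrt_le_sqrt hb.le)
            (Real.sqrt_nonneg _) (Real.sqrt_nonneg _)
      _ = ε / 2 := Real.mul_self_sqrt (by positivity)
      _ < ε := by linarith
  obtain ⟨s, hs⟩ := cauchySeq_tendsto_of_complete hcau
  have hsum : HasSum g s := hs
  refine ⟨s, hsum, ?_⟩
  have hp' : Filter.Tendsto (fun F : Finset I => ∑ i ∈ F, p i * star (p i))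
      Filter.atTop (nhds P) := hp
  have hq' : Filter.Tendsto (fun F : Finset I => ∑ i ∈ F, star (q i) * q i)
      Filter.atTop (nhds Q) := hq
  exact le_of_tendsto_of_tendsto' (hsum.norm.pow 2) (hp'.norm.mul hq'.norm) key
end

section
/- Let A be a C*-algebra and φ : A → M(A ⊗ A) a comultiplication such that φ(A)(1 ⊗ A) ⊆ A ⊗ A and φ(A)(A ⊗ 1) ⊆ A ⊗ A. Then the maps T_1(a ⊗ b) = φ(a)(1 ⊗ b) and T_2(a ⊗ b) = (a ⊗ 1)φ(b), defined on A ⊙ A, are contractive from A ⊙ A equipped with the Haagerup norm to A ⊗ A with the C*-norm: ‖T_k(x)‖ ≤ ‖x‖_h for k = 1, 2 and all x ∈ A ⊙ A. -/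
open scoped TensorProduct

open scoped InnerProductSpace WithCStarModule

/-- Cauchy–Schwarz for rows and columns in a unital C⋆-algebra, with respect to a
compatible order. -/
private lemma cs_unital' {B : Type*} [CStarAlgebra B] [PartialOrder B] [StarOrderedRing B]
    {n : ℕ} (u v : Fin n → B) :
    ‖∑ i, u i * v i‖ ≤ Real.sqrt ‖∑ i, u i * star (u i)‖ * Real.sqrt ‖∑ i, star (v i) * v i‖ := by
  let x : C⋆ᵐᵒᵈ(B, Fin n → B) := (WithCStarModule.equiv B (Fin n → B)).symm fun i => star (v i)
  let y : C⋆ᵐᵒᵈ(B, Fin n → B) := (WithCStarModule.equiv B (Fin n → B)).symm u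
  have h1 : ⟪x, y⟫_B = ∑ i, u i * v i := by
    simp [x, y, WithCStarModule.pi_inner, WithCStarModule.inner_def]
  have h2 := CStarModule.norm_inner_le (A := B) (E := C⋆ᵐᵒᵈ(B, Fin n → B)) (x := x) (y := y)
  rw [h1] at h2
  refine h2.trans ?_
  have hx : ‖x‖ = Real.sqrt ‖∑ i, star (v i) * v i‖ := by
    rw [WithCStarModule.pi_norm]
    congr 2
    simp [x, WithCStarModule.inner_def]
  have hy : ‖y‖ = Real.sqrt ‖∑ i, u i * star (u i)‖ := by
    rw [WithCStarModule.pi_norm]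
    congr 2
  rw [hx, hy, mul_comm]

/-- Cauchy–Schwarz for rows and columns in a unital C⋆-algebra. -/
private lemma cs_unital {B : Type*} [CStarAlgebra B] {n : ℕ} (u v : Fin n → B) :
    ‖∑ i, u i * v i‖ ≤ Real.sqrt ‖∑ i, u i * star (u i)‖ * Real.sqrt ‖∑ i, star (v i) * v i‖ := by
  letI := CStarAlgebra.spectralOrder B
  haveI := CStarAlgebra.spectralOrderedRing B
  exact cs_unital' u v

/-- Cauchy–Schwarz for rows and columns in a non-unital C⋆-algebra, via the unitization. -/
private lemma cs_nonunital {E : Type*} [NonUnitalCStarAlgebra E] {n : ℕ} (u v : Fin n → E) :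
    ‖∑ i, u i * v i‖ ≤ Real.sqrt ‖∑ i, u i * star (u i)‖ * Real.sqrt ‖∑ i, star (v i) * v i‖ := by
  have h := cs_unital (B := Unitization ℂ E)
    (fun i => (u i : Unitization ℂ E)) (fun i => (v i : Unitization ℂ E))
  have e : ∀ w z : Fin n → E, ((∑ i, w i * z i : E) : Unitization ℂ E)
      = ∑ i, (w i : Unitization ℂ E) * (z i : Unitization ℂ E) := by
    intro w z
    simp only [← Unitization.inr_mul]
    exact map_sum (Unitization.inrNonUnitalStarAlgHom ℂ E) _ _
  rw [← Unitization.norm_inr (𝕜 := ℂ) (∑ i, u i * v i),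
    ← Unitization.norm_inr (𝕜 := ℂ) (∑ i, u i * star (u i)),
    ← Unitization.norm_inr (𝕜 := ℂ) (∑ i, star (v i) * v i),
    e, e, e]
  simpa [Unitization.inr_star] using h

/-- Every element of an algebraic tensor product is a finite sum of elementary tensors. -/
private lemma exists_fin_repr {R M N : Type*} [CommSemiring R] [AddCommMonoid M]
    [AddCommMonoid N] [Module R M] [Module R N] (x : M ⊗[R] N) :
    ∃ (n : ℕ) (p : Fin n → M) (q : Fin n → N), x = ∑ i, p i ⊗ₜ[R] q i := by
  induction x with
  | zero => exact ⟨0, Fin.elim0, Fin.elim0, by simp⟩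
  | tmul a b => exact ⟨1, fun _ => a, fun _ => b, by simp⟩
  | add x y hx hy =>
    obtain ⟨n, p, q, rfl⟩ := hx
    obtain ⟨m, r, s, rfl⟩ := hy
    refine ⟨n + m, Fin.append p r, Fin.append q s, ?_⟩
    rw [Fin.sum_univ_add]
    simp

/-- Let `φ : A → M(A ⊗ A)` be a comultiplication with
`φ(A)(1 ⊗ A) ⊆ A ⊗ A` and `φ(A)(A ⊗ 1) ⊆ A ⊗ A`.  Then the maps
`T₁(a ⊗ b) = φ(a)(1 ⊗ b)` and `T₂(a ⊗ b) = (a ⊗ 1)φ(b)` are contractive from `A ⊙ A`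
with the Haagerup norm to `A ⊗ A` with the C*-norm.  Here `M(A ⊗ A)` is modelled by a
C*-algebra `E` containing a copy of the minimal tensor product `A ⊗ A`: `π₁, π₂` are the
commuting isometric embeddings `a ↦ a ⊗ 1`, `b ↦ 1 ⊗ b`, `j` is the induced embedding of
`A ⊙ A`, and `φ : A → E` is a *-homomorphism whose products with `π₂(A)` (resp. `π₁(A)`)
lie in the closure of the range of `j`, i.e. in `A ⊗ A`. -/
theorem comultiplication_T1_T2_contractive
    {A E : Type*}
    [NonUnitalNormedRing A] [StarRing A] [CStarRing A] [CompleteSpace A]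
    [NormedSpace ℂ A] [IsScalarTower ℂ A A] [SMulCommClass ℂ A A] [StarModule ℂ A]
    [NonUnitalNormedRing E] [StarRing E] [CStarRing E] [CompleteSpace E]
    [NormedSpace ℂ E] [IsScalarTower ℂ E E] [SMulCommClass ℂ E E] [StarModule ℂ E]
    (φ π₁ π₂ : A →⋆ₙₐ[ℂ] E)
    (hcomm : ∀ a b : A, Commute (π₁ a) (π₂ b))
    (hπ₁ : ∀ a : A, ‖π₁ a‖ = ‖a‖) (hπ₂ : ∀ a : A, ‖π₂ a‖ = ‖a‖)
    (j : A ⊗[ℂ] A →ₗ[ℂ] E) (hj : ∀ a b : A, j (a ⊗ₜ[ℂ] b) = π₁ a * π₂ b)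
    (hrange₁ : ∀ a b : A, φ a * π₂ b ∈ closure (Set.range j))
    (hrange₂ : ∀ a b : A, π₁ a * φ b ∈ closure (Set.range j))
    (T₁ T₂ : A ⊗[ℂ] A →ₗ[ℂ] E)
    (hT₁ : ∀ a b : A, T₁ (a ⊗ₜ[ℂ] b) = φ a * π₂ b)
    (hT₂ : ∀ a b : A, T₂ (a ⊗ₜ[ℂ] b) = π₁ a * φ b)
    (x : A ⊗[ℂ] A) :
    ‖T₁ x‖ ≤ haagerupNorm A x ∧ ‖T₂ x‖ ≤ haagerupNorm A x := by
  letI : NonUnitalCStarAlgebra A := {}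
  letI : NonUnitalCStarAlgebra E := {}
  have hsub : ∀ (T : A ⊗[ℂ] A →ₗ[ℂ] E) (ψ₁ ψ₂ : A →⋆ₙₐ[ℂ] E),
      (∀ a b, T (a ⊗ₜ[ℂ] b) = ψ₁ a * ψ₂ b) →
      (∀ a, ‖ψ₁ a‖ ≤ ‖a‖) → (∀ a, ‖ψ₂ a‖ ≤ ‖a‖) →
      ‖T x‖ ≤ haagerupNorm A x := by
    intro T ψ₁ ψ₂ hT h1 h2
    apply le_csInf
    · obtain ⟨n, p, q, hx⟩ := exists_fin_repr x
      exact ⟨_, n, p, q, hx, rfl⟩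
    · rintro c ⟨n, p, q, hx, rfl⟩
      have hTx : T x = ∑ i, ψ₁ (p i) * ψ₂ (q i) := by
        rw [hx, map_sum]
        simp only [hT]
      rw [hTx]
      refine (cs_nonunital _ _).trans ?_
      have e1 : ∑ i, ψ₁ (p i) * star (ψ₁ (p i)) = ψ₁ (∑ i, p i * star (p i)) := by
        simp [map_sum, map_star]
      have e2 : ∑ i, star (ψ₂ (q i)) * ψ₂ (q i) = ψ₂ (∑ i, star (q i) * q i) := by
        simp [map_sum, map_star]
      rw [e1, e2]
      gcongr
      · exact h1 _
      · exact h2 _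
  exact ⟨hsub T₁ φ π₂ hT₁ (fun a => NonUnitalStarAlgHom.norm_apply_le φ a) (fun a => (hπ₂ a).le),
    hsub T₂ π₁ φ hT₂ (fun a => (hπ₁ a).le) (fun a => NonUnitalStarAlgHom.norm_apply_le φ a)⟩
end

section
/- Let A be a C*-algebra with comultiplication φ such that φ(A)(1⊗A), φ(A)(A⊗1) ⊆ A ⊗ A, and assume the map T_2 : a ⊗ b ↦ (a ⊗ 1)φ(b) is injective on A ⊙ A. If x ∈ M(A) satisfies φ(x) = x ⊗ 1, then x ∈ ℂ·1. -/
open scoped TensorProduct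

/-- Let `φ` be a comultiplication on `A` such that the map
`T₂ : a ⊗ b ↦ (a ⊗ 1)φ(b)` is injective on the algebraic tensor product `A ⊙ A`.
If a multiplier `x ∈ M(A)` satisfies `φ(x) = x ⊗ 1`, then `x ∈ ℂ·1`.
The multiplier `x` is modelled by its pair of left/right multiplication maps `(L, R)`
with `a·L(b) = R(a)·b`; the relation `φ(x) = x ⊗ 1` is expressed through the extension
of `φ`: `(a ⊗ 1)φ(xb) = (ax ⊗ 1)φ(b)`, i.e. `π₁(a)·φ(L b) = π₁(R a)·φ(b)`; and the
conclusion `x ∈ ℂ·1` reads `L = R = c·id` for a scalar `c`. -/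
theorem multiplier_scalar_of_comul_fix
    {A E : Type*}
    [NonUnitalNormedRing A] [StarRing A] [CStarRing A] [CompleteSpace A]
    [NormedSpace ℂ A] [IsScalarTower ℂ A A] [SMulCommClass ℂ A A] [StarModule ℂ A]
    [NonUnitalNormedRing E] [StarRing E] [CStarRing E] [CompleteSpace E]
    [NormedSpace ℂ E] [IsScalarTower ℂ E E] [SMulCommClass ℂ E E] [StarModule ℂ E]
    (φ π₁ : A →⋆ₙₐ[ℂ] E)
    (T₂ : A ⊗[ℂ] A →ₗ[ℂ] E)
    (hT₂ : ∀ a b : A, T₂ (a ⊗ₜ[ℂ] b) = π₁ a * φ b)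
    (hinj : Function.Injective T₂)
    (L R : A →L[ℂ] A)
    (hcentral : ∀ a b : A, a * L b = R a * b)
    (hx : ∀ a b : A, π₁ a * φ (L b) = π₁ (R a) * φ b) :
    ∃ c : ℂ, (∀ a : A, L a = c • a) ∧ (∀ a : A, R a = c • a) := by
  have key : ∀ a b : A, a ⊗ₜ[ℂ] L b = R a ⊗ₜ[ℂ] b := fun a b =>
    hinj (by rw [hT₂, hT₂, hx])
  by_cases hA : ∀ a : A, a = 0
  · exact ⟨0, fun a => by simp [hA (L a), hA a],
      fun a => by simp [hA (R a), hA a]⟩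
  · push_neg at hA
    obtain ⟨a₀, ha₀⟩ := hA
    obtain ⟨f, _, hf⟩ := exists_dual_vector ℂ a₀ (norm_ne_zero_iff.mpr ha₀)
    have hfa₀ : f a₀ ≠ 0 := by
      rw [hf]
      simp [ha₀]
    set c : ℂ := f (R a₀) / f a₀ with hc
    -- apply (f ⊗ id) to the tensor identity
    have hg : ∀ a b : A,
        f a • b = (TensorProduct.lift ((LinearMap.lsmul ℂ A).comp
          (f.toLinearMap))) (a ⊗ₜ[ℂ] b) := fun a b => by
      simp [TensorProduct.lift.tmul]
    have hL : ∀ b : A, L b = c • b := by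
      intro b
      have h1 : f a₀ • L b = f (R a₀) • b := by
        rw [hg, hg, key]
      have := congrArg (fun y => (f a₀)⁻¹ • y) h1
      simpa [smul_smul, inv_mul_cancel₀ hfa₀, hc, div_eq_mul_inv, mul_comm] using this
    refine ⟨c, hL, fun a => ?_⟩
    have hz : ∀ b : A, (R a - c • a) * b = 0 := by
      intro b
      have h1 : a * L b = R a * b := hcentral a b
      rw [hL b] at h1
      have h2 : (c • a) * b = R a * b := by
        rw [smul_mul_assoc, ← mul_smul_comm, h1]
      rw [sub_mul, h2, sub_self]
    have := hz (star (R a - c • a))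
    rw [CStarRing.mul_star_self_eq_zero_iff] at this
    exact sub_eq_zero.mp this
end

section
/- Let G be a locally compact semigroup (locally compact Hausdorff space with a continuous associative multiplication) whose comultiplication φ on C₀(G), φ(f)(p,q) = f(pq), satisfies: φ(f)(1 ⊗ g) ∈ C₀(G × G) and φ(f)(g ⊗ 1) ∈ C₀(G × G) for all f, g ∈ C₀(G); moreover φ(f)(1 ⊗ g) = 0 implies f = 0 or g = 0, and φ(f)(g ⊗ 1) = 0 implies f = 0 or g = 0. Then G is a topological group (the multiplication admits an identity, every element has an inverse, and inversion is continuous). -/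
open scoped ZeroAtInfty
open Filter Set

section Aux

variable {G : Type*} [TopologicalSpace G] [LocallyCompactSpace G] [T2Space G]

/-- A compactly supported complex bump function equal to 1 on `K` and vanishing off `U`. -/
lemma exists_c0_bump {K U : Set G} (hK : IsCompact K) (hU : IsOpen U) (hKU : K ⊆ U) :
    ∃ f : C₀(G, ℂ), (∀ x ∈ K, f x = 1) ∧ (∀ x ∉ U, f x = 0) ∧ ∀ x, ‖f x‖ ≤ 1 := by
  obtain ⟨f, hf1, hf0, hfc, hf01⟩ :=
    exists_continuous_one_zero_of_isCompact hK hU.isClosed_compl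
      (Set.disjoint_left.mpr fun x hx hx' => hx' (hKU hx))
  have hfc' : HasCompactSupport (fun y => (f y : ℂ)) :=
    hfc.comp_left (g := fun r : ℝ => (r : ℂ)) Complex.ofReal_zero
  refine ⟨⟨⟨fun y => (f y : ℂ), Complex.continuous_ofReal.comp f.continuous⟩,
      hfc'.is_zero_at_infty⟩, ?_, ?_, ?_⟩
  · intro x hx
    simp [hf1 hx]
  · intro x hx
    simp [hf0 hx]
  · intro x
    have := (hf01 x).1
    have := (hf01 x).2
    simp only [ZeroAtInftyContinuousMap.coe_mk, ContinuousMap.coe_mk, Complex.norm_real,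
      Real.norm_eq_abs]
    rw [abs_of_nonneg (hf01 x).1]
    exact (hf01 x).2

lemma aux_proper_surj (σ : G × G → G × G) (hσ : Continuous σ)
    (hprop : ∀ f g : C₀(G, ℂ),
      Tendsto (fun x => f (σ x).1 * g (σ x).2) (cocompact (G × G)) (nhds 0))
    (hd : ∀ f g : C₀(G, ℂ), (∀ x, f (σ x).1 * g (σ x).2 = 0) → f = 0 ∨ g = 0) :
    IsProperMap σ ∧ Function.Surjective σ := by
  have hproper : IsProperMap σ := by
    rw [isProperMap_iff_isCompact_preimage]
    refine ⟨hσ, fun K hK => ?_⟩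
    obtain ⟨f, hf1, -, -⟩ := exists_c0_bump (K := Prod.fst '' K) (U := (univ : Set G))
      (hK.image continuous_fst) isOpen_univ (subset_univ _)
    obtain ⟨g, hg1, -, -⟩ := exists_c0_bump (K := Prod.snd '' K) (U := (univ : Set G))
      (hK.image continuous_snd) isOpen_univ (subset_univ _)
    have hball : {z : ℂ | ‖z‖ < 1} ∈ nhds (0 : ℂ) := by
      have : Metric.ball (0 : ℂ) 1 ∈ nhds (0 : ℂ) := Metric.ball_mem_nhds _ one_pos
      simpa [Metric.ball, dist_eq_norm] using this
    have := (hprop f g) hball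
    rw [mem_map, mem_cocompact] at this
    obtain ⟨C, hC, hsub⟩ := this
    refine hC.of_isClosed_subset (hK.isClosed.preimage hσ) ?_
    intro x hx
    by_contra hxC
    have hlt := hsub hxC
    have h1 : f (σ x).1 = 1 := hf1 _ ⟨σ x, hx, rfl⟩
    have h2 : g (σ x).2 = 1 := hg1 _ ⟨σ x, hx, rfl⟩
    simp only [mem_preimage, mem_setOf_eq, h1, h2, one_mul, norm_one] at hlt
    exact lt_irrefl _ hlt
  refine ⟨hproper, ?_⟩
  have hcl : IsClosed (range σ) := hproper.isClosedMap.isClosed_range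
  by_contra hns
  rw [Function.Surjective] at hns
  push_neg at hns
  obtain ⟨⟨a, b⟩, hab⟩ := hns
  have hmem : (a, b) ∈ (range σ)ᶜ := fun h => by
    obtain ⟨x, hx⟩ := h; exact hab x hx
  obtain ⟨U, V, hUo, hVo, haU, hbV, hUV⟩ :=
    isOpen_prod_iff.mp hcl.isOpen_compl a b hmem
  obtain ⟨f, hf1, hf0, -⟩ := exists_c0_bump (K := {a}) isCompact_singleton hUo (by simpa using haU)
  obtain ⟨g, hg1, hg0, -⟩ := exists_c0_bump (K := {b}) isCompact_singleton hVo (by simpa using hbV)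
  have hzero : ∀ x, f (σ x).1 * g (σ x).2 = 0 := by
    intro x
    by_contra hne
    have hU1 : (σ x).1 ∈ U := by
      by_contra h; exact hne (by rw [hf0 _ h, zero_mul])
    have hV1 : (σ x).2 ∈ V := by
      by_contra h; exact hne (by rw [hg0 _ h, mul_zero])
    have : σ x ∈ (range σ)ᶜ := hUV (by exact ⟨hU1, hV1⟩)
    exact this ⟨x, rfl⟩
  rcases hd f g hzero with h | h
  · have : f a = 0 := by rw [h]; rfl
    rw [hf1 a rfl] at this; exact one_ne_zero this
  · have : g b = 0 := by rw [h]; rfl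
    rw [hg1 b rfl] at this; exact one_ne_zero this

end Aux

/-- Let `G` be a locally compact Hausdorff semigroup whose
comultiplication `φ(f)(p,q) = f(pq)` on `C₀(G)` satisfies `φ(f)(1 ⊗ g) ∈ C₀(G × G)` and
`φ(f)(g ⊗ 1) ∈ C₀(G × G)` for all `f, g ∈ C₀(G)` (i.e. the functions
`(p,q) ↦ f(pq)g(q)` and `(p,q) ↦ f(pq)g(p)` vanish at infinity on `G × G`), and such
that `φ(f)(1 ⊗ g) = 0` implies `f = 0` or `g = 0`, and similarly on the other side.
Then `G` is a topological group: there is an identity, every element is invertible, and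
inversion is continuous. -/
theorem topological_group_of_C0_comul
    {G : Type*} [Semigroup G] [TopologicalSpace G] [ContinuousMul G]
    [LocallyCompactSpace G] [T2Space G] [Nonempty G]
    (hC01 : ∀ f g : C₀(G, ℂ),
      Filter.Tendsto (fun pq : G × G => f (pq.1 * pq.2) * g pq.2)
        (Filter.cocompact (G × G)) (nhds 0))
    (hC02 : ∀ f g : C₀(G, ℂ),
      Filter.Tendsto (fun pq : G × G => f (pq.1 * pq.2) * g pq.1)
        (Filter.cocompact (G × G)) (nhds 0))
    (hinj1 : ∀ f g : C₀(G, ℂ), (∀ p q : G, f (p * q) * g q = 0) → f = 0 ∨ g = 0)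
    (hinj2 : ∀ f g : C₀(G, ℂ), (∀ p q : G, f (p * q) * g p = 0) → f = 0 ∨ g = 0) :
    ∃ e : G, (∀ g : G, e * g = g ∧ g * e = g) ∧
      (∃ inv : G → G, Continuous inv ∧ ∀ g : G, g * inv g = e ∧ inv g * g = e) := by
  classical
  set σ1 : G × G → G × G := fun x => (x.1 * x.2, x.2) with hσ1def
  set σ2 : G × G → G × G := fun x => (x.1 * x.2, x.1) with hσ2def
  have hσ1c : Continuous σ1 :=
    (continuous_fst.mul continuous_snd).prodMk continuous_snd
  have hσ2c : Continuous σ2 :=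
    (continuous_fst.mul continuous_snd).prodMk continuous_fst
  obtain ⟨hprop1, hsurj1⟩ := aux_proper_surj σ1 hσ1c (fun f g => hC01 f g)
    (fun f g h => hinj1 f g (fun p q => h (p, q)))
  obtain ⟨-, hsurj2⟩ := aux_proper_surj σ2 hσ2c (fun f g => hC02 f g)
    (fun f g h => hinj2 f g (fun p q => h (p, q)))
  -- solvability of z * a = b and a * z = b
  have S1 : ∀ x y : G, ∃ p : G, p * y = x := by
    intro x y
    obtain ⟨⟨p, q⟩, h⟩ := hsurj1 (x, y)
    have hq : q = y := congrArg Prod.snd h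
    have hpq : p * q = x := congrArg Prod.fst h
    exact ⟨p, by rw [← hq]; exact hpq⟩
  have S2 : ∀ x y : G, ∃ q : G, y * q = x := by
    intro x y
    obtain ⟨⟨p, q⟩, h⟩ := hsurj2 (x, y)
    have hp : p = y := congrArg Prod.snd h
    have hpq : p * q = x := congrArg Prod.fst h
    exact ⟨q, by rw [← hp]; exact hpq⟩
  -- build the identity
  obtain ⟨a⟩ := (inferInstance : Nonempty G)
  obtain ⟨e, he⟩ := S1 a a    -- e * a = a
  obtain ⟨e', he'⟩ := S2 a a  -- a * e' = a
  have hleft : ∀ b : G, e * b = b := by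
    intro b
    obtain ⟨y, hy⟩ := S2 b a  -- a * y = b
    calc e * b = e * (a * y) := by rw [hy]
    _ = (e * a) * y := (mul_assoc _ _ _).symm
    _ = a * y := by rw [he]
    _ = b := hy
  have hright : ∀ b : G, b * e' = b := by
    intro b
    obtain ⟨z, hz⟩ := S1 b a  -- z * a = b
    calc b * e' = (z * a) * e' := by rw [hz]
    _ = z * (a * e') := mul_assoc _ _ _
    _ = z * a := by rw [he']
    _ = b := hz
  have hee : e = e' := by rw [← hleft e', hright e]
  have hright' : ∀ b : G, b * e = b := by intro b; rw [hee]; exact hright b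
  -- two-sided inverses
  have hinv : ∀ g : G, ∃ l : G, l * g = e ∧ g * l = e := by
    intro g
    obtain ⟨l, hl⟩ := S1 e g  -- l * g = e
    obtain ⟨r, hr⟩ := S2 e g  -- g * r = e
    have hlr : l = r := by
      calc l = l * e := (hright' l).symm
      _ = l * (g * r) := by rw [hr]
      _ = (l * g) * r := (mul_assoc _ _ _).symm
      _ = e * r := by rw [hl]
      _ = r := hleft r
    exact ⟨l, hl, by rw [hlr]; exact hr⟩
  -- σ1 is a bijection
  have hinj : Function.Injective σ1 := by
    rintro ⟨p, q⟩ ⟨p', q'⟩ h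
    have hq : q = q' := congrArg Prod.snd h
    have hpq : p * q = p' * q' := congrArg Prod.fst h
    obtain ⟨l, hl, hr⟩ := hinv q
    have : p = p' := by
      calc p = p * e := (hright' p).symm
      _ = p * (q * l) := by rw [hr]
      _ = (p * q) * l := (mul_assoc _ _ _).symm
      _ = (p' * q') * l := by rw [hpq]
      _ = (p' * q) * l := by rw [hq]
      _ = p' * (q * l) := mul_assoc _ _ _
      _ = p' * e := by rw [hr]
      _ = p' := hright' p'
    rw [this, hq]
  set E : (G × G) ≃ (G × G) := Equiv.ofBijective σ1 ⟨hinj, hsurj1⟩ with hEdef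
  have hEsymm : Continuous E.symm := by
    rw [continuous_iff_isClosed]
    intro F hF
    have : E.symm ⁻¹' F = σ1 '' F := by
      rw [← Equiv.image_eq_preimage_symm]
      rfl
    rw [this]
    exact hprop1.isClosedMap F hF
  refine ⟨e, fun g => ⟨hleft g, hright' g⟩, fun g => (E.symm (e, g)).1, ?_, ?_⟩
  · exact continuous_fst.comp (hEsymm.comp (continuous_const.prodMk continuous_id))
  · intro g
    obtain ⟨l, hl, hr⟩ := hinv g
    have hE : E.symm (e, g) = (l, g) := by
      rw [Equiv.symm_apply_eq]
      exact (show σ1 (l, g) = (e, g) by simp only [hσ1def, hl]).symm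
    dsimp only
    rw [hE]
    exact ⟨hr, hl⟩
end

section
/- Let G be a locally compact Hausdorff space with a continuous associative multiplication satisfying Gs = G and sG = G for all s ∈ G (left and right divisibility). Then G is a group: there is an identity element and every element has an inverse. -/
/-- Let `G` be a (nonempty) locally compact Hausdorff space with a
continuous associative multiplication satisfying `Gs = G` and `sG = G` for all `s ∈ G`.
Then `G` is a group: there is an identity element and every element has an inverse.
(The argument is purely algebraic.) -/
theorem group_of_divisibility
    {G : Type*} [Semigroup G] [TopologicalSpace G] [ContinuousMul G]
    [LocallyCompactSpace G] [T2Space G] [Nonempty G]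
    (hleft : ∀ s t : G, ∃ r : G, r * s = t)
    (hright : ∀ s t : G, ∃ r : G, s * r = t) :
    ∃ e : G, (∀ g : G, e * g = g ∧ g * e = g) ∧
      (∀ g : G, ∃ g' : G, g * g' = e ∧ g' * g = e) := by
  obtain ⟨s⟩ := ‹Nonempty G›
  obtain ⟨e, he⟩ := hleft s s
  obtain ⟨f, hf⟩ := hright s s
  have hL : ∀ g : G, e * g = g := by
    intro g
    obtain ⟨r, hr⟩ := hright s g
    rw [← hr, ← mul_assoc, he]
  have hR : ∀ g : G, g * f = g := by
    intro g
    obtain ⟨r, hr⟩ := hleft s g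
    rw [← hr, mul_assoc, hf]
  have hef : e = f := by rw [← hL f, hR e]
  refine ⟨e, fun g => ⟨hL g, by rw [hef, hR g]⟩, fun g => ?_⟩
  obtain ⟨g', hg'⟩ := hright g e
  obtain ⟨g'', hg''⟩ := hleft g e
  have : g'' = g' := by
    have := congrArg (· * g') hg''
    simp only [hL] at this
    rw [← this, mul_assoc, hg', hef, hR]
  exact ⟨g', hg', this ▸ hg''⟩
end
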